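/- For the uniform fragmentation equation (κ(x,y) = 2/y for x ≤ y, k = 2), the function N(x) = 4B²x e^{-2Bx} is the steady state: it satisfies N'(x) + 2BN(x) = 2B∫_x^∞ N(y)/y dy, N(0) = 0, N > 0 on (0,∞), and ∫₀^∞ N(x) dx = 1. -/

import Mathlib

open MeasureTheory Set Filter

private lemma deriv_aux (B x : ℝ) :
    HasDerivAt (fun z => 4 * B ^ 2 * z * Real.exp (-(2 * B * z)))
      (4 * B ^ 2 * (1 - 2 * B * x) * Real.exp (-(2 * B * x))) x := by
  have h1 : HasDerivAt (fun z : ℝ => -(2 * B * z)) (-(2 * B)) x := by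
    have := ((hasDerivAt_id x).const_mul (2 * B)).neg
    simp only [id_eq, mul_one] at this
    exact this
  have h2 := h1.exp
  have h3 : HasDerivAt (fun z : ℝ => 4 * B ^ 2 * z) (4 * B ^ 2) x := by
    simpa using (hasDerivAt_id x).const_mul (4 * B ^ 2)
  refine (h3.mul h2).congr_deriv ?_
  ring

private lemma antideriv_aux (B x : ℝ) :
    HasDerivAt (fun z => -((2 * B * z + 1) * Real.exp (-(2 * B * z))))
      (4 * B ^ 2 * x * Real.exp (-(2 * B * x))) x := by
  have h1 : HasDerivAt (fun z : ℝ => -(2 * B * z)) (-(2 * B)) x := by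
    have := ((hasDerivAt_id x).const_mul (2 * B)).neg
    simp only [id_eq, mul_one] at this
    exact this
  have h2 := h1.exp
  have h3 : HasDerivAt (fun z : ℝ => 2 * B * z + 1) (2 * B) x := by
    simpa using (((hasDerivAt_id x).const_mul (2 * B)).add_const 1)
  refine (h3.mul h2).neg.congr_deriv ?_
  ring

private lemma antideriv2_aux (B x : ℝ) :
    HasDerivAt (fun z => -(2 * B * Real.exp (-(2 * B * z))))
      (4 * B ^ 2 * Real.exp (-(2 * B * x))) x := by
  have h1 : HasDerivAt (fun z : ℝ => -(2 * B * z)) (-(2 * B)) x := by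
    have := ((hasDerivAt_id x).const_mul (2 * B)).neg
    simp only [id_eq, mul_one] at this
    exact this
  have h2 := h1.exp
  refine (h2.const_mul (2 * B)).neg.congr_deriv ?_
  ring

private lemma lim_aux (B : ℝ) (hB : 0 < B) :
    Tendsto (fun z : ℝ => -((2 * B * z + 1) * Real.exp (-(2 * B * z)))) atTop (nhds 0) := by
  have hu : Tendsto (fun z : ℝ => 2 * B * z) atTop atTop :=
    Tendsto.const_mul_atTop (by linarith) tendsto_id
  have h1 : Tendsto (fun u : ℝ => (u + 1) * Real.exp (-u)) atTop (nhds 0) := by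
    have ha : Tendsto (fun u : ℝ => u * Real.exp (-u)) atTop (nhds 0) := by
      simpa using Real.tendsto_pow_mul_exp_neg_atTop_nhds_zero 1
    have hb : Tendsto (fun u : ℝ => Real.exp (-u)) atTop (nhds 0) := by
      simpa using Real.tendsto_exp_neg_atTop_nhds_zero
    have := ha.add hb
    simpa [add_mul] using this
  have := (h1.comp hu).neg
  simpa using this

private lemma lim2_aux (B : ℝ) (hB : 0 < B) :
    Tendsto (fun z : ℝ => -(2 * B * Real.exp (-(2 * B * z)))) atTop (nhds 0) := by
  have hu : Tendsto (fun z : ℝ => 2 * B * z) atTop atTop :=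
    Tendsto.const_mul_atTop (by linarith) tendsto_id
  have hb : Tendsto (fun u : ℝ => Real.exp (-u)) atTop (nhds 0) := by
    simpa using Real.tendsto_exp_neg_atTop_nhds_zero
  have := ((hb.comp hu).const_mul (2 * B)).neg
  simpa using this

theorem stmt_13 (B : ℝ) (hB : 0 < B) :
    (4 * B ^ 2 * 0 * Real.exp (-(2 * B * 0)) = 0) ∧
    (∀ x > (0:ℝ), 0 < 4 * B ^ 2 * x * Real.exp (-(2 * B * x))) ∧
    ((∫ x in Set.Ioi (0:ℝ), 4 * B ^ 2 * x * Real.exp (-(2 * B * x))) = 1) ∧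
    (∀ x > (0:ℝ),
      HasDerivAt (fun z => 4 * B ^ 2 * z * Real.exp (-(2 * B * z)))
        (4 * B ^ 2 * (1 - 2 * B * x) * Real.exp (-(2 * B * x))) x ∧
      4 * B ^ 2 * (1 - 2 * B * x) * Real.exp (-(2 * B * x))
          + 2 * B * (4 * B ^ 2 * x * Real.exp (-(2 * B * x)))
        = 2 * B * ∫ y in Set.Ioi x, (4 * B ^ 2 * y * Real.exp (-(2 * B * y))) / y) := by
  refine ⟨by ring, ?_, ?_, ?_⟩
  · intro x hx
    have := Real.exp_pos (-(2 * B * x))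
    positivity
  · have := integral_Ioi_of_hasDerivAt_of_nonneg
      (g := fun z => -((2 * B * z + 1) * Real.exp (-(2 * B * z))))
      (g' := fun z => 4 * B ^ 2 * z * Real.exp (-(2 * B * z)))
      (a := 0) (l := 0)
      (antideriv_aux B 0).continuousAt.continuousWithinAt
      (fun x _ => antideriv_aux B x)
      (fun x hx => by
        have := (Real.exp_pos (-(2 * B * x))).le
        have hx' : (0:ℝ) ≤ x := le_of_lt hx
        positivity)
      (lim_aux B hB)
    rw [this]
    simp
  · intro x hx
    refine ⟨deriv_aux B x, ?_⟩
    have hcongr : ∫ y in Set.Ioi x, (4 * B ^ 2 * y * Real.exp (-(2 * B * y))) / y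
        = ∫ y in Set.Ioi x, 4 * B ^ 2 * Real.exp (-(2 * B * y)) := by
      refine setIntegral_congr_fun measurableSet_Ioi (fun y hy => ?_)
      have hy0 : y ≠ 0 := by
        have : x < y := hy
        exact ne_of_gt (lt_trans hx this)
      field_simp
    rw [hcongr]
    have := integral_Ioi_of_hasDerivAt_of_nonneg
      (g := fun z => -(2 * B * Real.exp (-(2 * B * z))))
      (g' := fun z => 4 * B ^ 2 * Real.exp (-(2 * B * z)))
      (a := x) (l := 0)
      (antideriv2_aux B x).continuousAt.continuousWithinAt
      (fun y _ => antideriv2_aux B y)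
      (fun y _ => by
        have := (Real.exp_pos (-(2 * B * y))).le
        positivity)
      (lim2_aux B hB)
    rw [this]
    ring
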